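/- Let H ∈ ℂ^{n×n} be Hermitian. The maximum of tr(Pᴴ H P) over all P ∈ ℂ^{n×k} with Pᴴ P = I_k equals the sum of the k largest eigenvalues of H. -/

import Mathlib

open scoped ComplexOrder
open Matrix

/-- The tuple `f` rearranged into decreasing order; `sortedDesc f 0` is the largest entry. -/
noncomputable def sortedDesc {m : ℕ} (f : Fin m → ℝ) : Fin m → ℝ :=
  fun i => (f ∘ Tuple.sort f) i.rev

/-- The singular values of a complex matrix, in decreasing order. -/
noncomputable def sv {n k : ℕ} (B : Matrix (Fin n) (Fin k) ℂ) : Fin k → ℝ :=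
  sortedDesc fun i =>
    Real.sqrt ((Matrix.posSemidef_conjTranspose_mul_self B).isHermitian.eigenvalues i)

/-- The trace (nuclear) norm: the sum of the singular values. -/
noncomputable def trNorm {n k : ℕ} (B : Matrix (Fin n) (Fin k) ℂ) : ℝ := ∑ i, sv B i

/-- The Frobenius norm. -/
noncomputable def frobNorm {n k : ℕ} (A : Matrix (Fin n) (Fin k) ℂ) : ℝ :=
  Real.sqrt (∑ i, ∑ j, ‖A i j‖ ^ 2)

/-- `‖sin Θ(R(X), R(Y))‖_F` where `Θ` is the diagonal matrix of canonical angles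
`θ_i = arccos σ_i(Xᴴ Y)` between the column spaces of `X` and `Y`. -/
noncomputable def sinThetaF {n k : ℕ} (X Y : Matrix (Fin n) (Fin k) ℂ) : ℝ :=
  Real.sqrt (∑ i, Real.sin (Real.arccos (sv (Xᴴ * Y) i)) ^ 2)

/-- The smallest singular value. -/
noncomputable def smin {n k : ℕ} (B : Matrix (Fin n) (Fin k) ℂ) : ℝ := ⨅ i, sv B i

/-- The spectral norm (largest singular value). -/
noncomputable def s2norm {n k : ℕ} (B : Matrix (Fin n) (Fin k) ℂ) : ℝ := ⨆ i, sv B i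

/-- The positive semidefinite square root of a positive semidefinite matrix (the former
`Matrix.PosSemidef.sqrt`, with its old definition). -/
noncomputable def psdSqrt {k : ℕ} {A : Matrix (Fin k) (Fin k) ℂ} (hA : A.PosSemidef) :
    Matrix (Fin k) (Fin k) ℂ :=
  (hA.isHermitian.eigenvectorUnitary : Matrix (Fin k) (Fin k) ℂ) *
    diagonal ((↑) ∘ (√·) ∘ hA.isHermitian.eigenvalues) *
    (star hA.isHermitian.eigenvectorUnitary : Matrix (Fin k) (Fin k) ℂ)

/-- The orthonormal polar factor `B (Bᴴ B)^{-1/2}` (for `B` of full column rank). -/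
noncomputable def polarFactor {n k : ℕ} (B : Matrix (Fin n) (Fin k) ℂ) :
    Matrix (Fin n) (Fin k) ℂ :=
  B * (psdSqrt (Matrix.posSemidef_conjTranspose_mul_self B))⁻¹

/-- Eigenvalues of a Hermitian matrix, in decreasing order. -/
noncomputable def eigsDesc {n : ℕ} {H : Matrix (Fin n) (Fin n) ℂ} (hH : H.IsHermitian) :
    Fin n → ℝ :=
  sortedDesc hH.eigenvalues

lemma sortedDesc_antitone {m : ℕ} (f : Fin m → ℝ) : Antitone (sortedDesc f) := by
  intro i j hij
  exact Tuple.monotone_sort f (Fin.rev_le_rev.mpr hij)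

lemma sum_topk_eq {n k : ℕ} (hkn : k ≤ n) (g : Fin n → ℝ) :
    ∑ i : Fin n, (if (i : ℕ) < k then g i else 0) = ∑ j : Fin k, g (Fin.castLE hkn j) := by
  rw [← Finset.sum_filter]
  rw [show (Finset.univ.filter (fun i : Fin n => (i : ℕ) < k))
      = Finset.univ.map (Fin.castLEEmb hkn) by
    ext i
    simp only [Finset.mem_filter, Finset.mem_univ, true_and, Finset.mem_map]
    constructor
    · intro h; exact ⟨⟨i, h⟩, by simp [Fin.castLEEmb, Fin.ext_iff]⟩
    · rintro ⟨j, rfl⟩; simpa using j.2]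
  rw [Finset.sum_map]
  rfl

/-- The threshold argument: if `μ` is antitone and `0 ≤ t ≤ 1` with `∑ t = k`, then
`∑ μᵢ tᵢ` is at most the sum of the `k` largest values of `μ`. -/
lemma sum_mul_le_topk {n k : ℕ} (hkn : k ≤ n) (μ : Fin n → ℝ) (hμ : Antitone μ)
    (t : Fin n → ℝ) (ht0 : ∀ i, 0 ≤ t i) (ht1 : ∀ i, t i ≤ 1)
    (hsum : ∑ i, t i = k) :
    ∑ i, μ i * t i ≤ ∑ j : Fin k, μ (Fin.castLE hkn j) := by
  rcases Nat.eq_zero_or_pos k with hk | hk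
  · subst hk
    have hz : ∀ i ∈ Finset.univ, t i = 0 :=
      (Finset.sum_eq_zero_iff_of_nonneg (fun i _ => ht0 i)).mp (by simpa using hsum)
    have : ∑ i, μ i * t i = 0 :=
      Finset.sum_eq_zero fun i hi => by rw [hz i hi, mul_zero]
    simp [this]
  · have hk1 : k - 1 < n := lt_of_lt_of_le (Nat.pred_lt hk.ne') hkn
    set c : ℝ := μ ⟨k - 1, hk1⟩ with hc
    set χ : Fin n → ℝ := fun i => if (i : ℕ) < k then 1 else 0 with hχ
    have hχsum : ∑ i, χ i = k := by
      have := sum_topk_eq hkn (fun _ => (1 : ℝ))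
      simpa [hχ] using this
    have hμχ : ∑ i, μ i * χ i = ∑ j : Fin k, μ (Fin.castLE hkn j) := by
      have := sum_topk_eq hkn μ
      rw [← this]
      refine Finset.sum_congr rfl fun i _ => ?_
      by_cases h : (i : ℕ) < k <;> simp [hχ, h]
    have key : ∑ i, (μ i - c) * (t i - χ i) ≤ 0 := by
      refine Finset.sum_nonpos fun i _ => ?_
      by_cases h : (i : ℕ) < k
      · have h1 : c ≤ μ i := hμ (by
          show (i : Fin n) ≤ ⟨k - 1, hk1⟩
          exact Fin.mk_le_mk.mpr (Nat.le_pred_of_lt h))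
        have h2 : t i - χ i ≤ 0 := by simp [hχ, h]; linarith [ht1 i]
        exact mul_nonpos_of_nonneg_of_nonpos (by linarith) h2
      · have h1 : μ i ≤ c := hμ (by
          show (⟨k - 1, hk1⟩ : Fin n) ≤ i
          exact Fin.mk_le_mk.mpr (by omega))
        have h2 : 0 ≤ t i - χ i := by simp [hχ, h]; linarith [ht0 i]
        exact mul_nonpos_of_nonpos_of_nonneg (by linarith) h2
    have expand : ∑ i, (μ i - c) * (t i - χ i)
        = ∑ i, μ i * t i - ∑ i, μ i * χ i - c * ∑ i, t i + c * ∑ i, χ i := by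
      simp only [sub_mul, mul_sub, Finset.sum_sub_distrib, Finset.mul_sum]
      ring
    rw [expand, hsum, hχsum, hμχ] at key
    linarith

/-- The unsorted version of the threshold argument. -/
lemma sum_mul_le_sortedDesc_topk {n k : ℕ} (hkn : k ≤ n) (f : Fin n → ℝ)
    (t : Fin n → ℝ) (ht0 : ∀ i, 0 ≤ t i) (ht1 : ∀ i, t i ≤ 1)
    (hsum : ∑ i, t i = k) :
    ∑ i, f i * t i ≤ ∑ j : Fin k, sortedDesc f (Fin.castLE hkn j) := by
  set e : Fin n ≃ Fin n := Fin.revPerm.trans (Tuple.sort f) with he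
  have hμ : ∀ j, sortedDesc f j = f (e j) := fun j => rfl
  have h1 : ∑ i, f i * t i = ∑ j, sortedDesc f j * t (e j) :=
    (Fintype.sum_equiv e (fun j => sortedDesc f j * t (e j)) (fun i => f i * t i)
      (fun j => rfl)).symm
  have h2 : ∑ j, t (e j) = (k : ℝ) := by
    rw [Fintype.sum_equiv e (fun j => t (e j)) t (fun j => rfl)]
    exact hsum
  rw [h1]
  exact sum_mul_le_topk hkn (sortedDesc f) (sortedDesc_antitone f)
    (fun j => t (e j)) (fun j => ht0 _) (fun j => ht1 _) h2

/-- Fan's trace maximization principle. -/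
theorem fan_trace_max {n k : ℕ} (hkn : k ≤ n)
    {H : Matrix (Fin n) (Fin n) ℂ} (hH : H.IsHermitian) :
    IsGreatest {x : ℝ | ∃ P : Matrix (Fin n) (Fin k) ℂ, Pᴴ * P = 1 ∧
        x = (Matrix.trace (Pᴴ * H * P)).re}
      (∑ i : Fin k, eigsDesc hH (Fin.castLE hkn i)) := by
  set U : Matrix (Fin n) (Fin n) ℂ := (hH.eigenvectorUnitary : Matrix (Fin n) (Fin n) ℂ)
    with hUdef
  have hU1 : Uᴴ * U = 1 := by
    have := (Matrix.mem_unitaryGroup_iff').mp hH.eigenvectorUnitary.2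
    simpa [Matrix.star_eq_conjTranspose] using this
  have hU2 : U * Uᴴ = 1 := by
    have := (Matrix.mem_unitaryGroup_iff).mp hH.eigenvectorUnitary.2
    simpa [Matrix.star_eq_conjTranspose] using this
  set D : Matrix (Fin n) (Fin n) ℂ :=
    Matrix.diagonal (RCLike.ofReal ∘ hH.eigenvalues) with hDdef
  have hspec : H = U * D * Uᴴ := by
    rw [hUdef, hDdef]
    simpa [Matrix.star_eq_conjTranspose] using hH.spectral_theorem
  constructor
  · -- membership: take the eigenvectors of the k largest eigenvalues
    set σ := Tuple.sort hH.eigenvalues with hσ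
    set emb : Fin k → Fin n := fun j => σ ((Fin.castLE hkn j).rev) with hemb
    have hembinj : Function.Injective emb :=
      σ.injective.comp (Fin.rev_injective.comp (Fin.castLE_injective hkn))
    have hmulleft : ∀ X : Matrix (Fin n) (Fin n) ℂ,
        Uᴴ.submatrix emb id * X = (Uᴴ * X).submatrix emb id := by
      intro X
      have := Matrix.submatrix_mul Uᴴ X emb id id Function.bijective_id
      rw [Matrix.submatrix_id_id] at this
      exact this.symm
    have hform : (U.submatrix id emb)ᴴ * H * U.submatrix id emb = D.submatrix emb emb := by
      rw [Matrix.conjTranspose_submatrix, hspec, hmulleft,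
        ← Matrix.submatrix_mul _ _ emb id emb Function.bijective_id]
      have hmid : Uᴴ * (U * D * Uᴴ) * U = D := by
        calc Uᴴ * (U * D * Uᴴ) * U = Uᴴ * U * D * (Uᴴ * U) := by simp only [Matrix.mul_assoc]
          _ = D := by rw [hU1, one_mul, mul_one]
      rw [hmid]
    refine ⟨U.submatrix id emb, ?_, ?_⟩
    · rw [Matrix.conjTranspose_submatrix,
        ← Matrix.submatrix_mul Uᴴ U emb id emb Function.bijective_id, hU1]
      ext i j
      simp [Matrix.submatrix_apply, Matrix.one_apply, hembinj.eq_iff]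
    · rw [hform]
      simp only [Matrix.trace, Matrix.diag, Matrix.submatrix_apply, hDdef,
        Matrix.diagonal_apply_eq, Function.comp_apply, Complex.re_sum]
      exact Finset.sum_congr rfl fun i _ => rfl
  · -- upper bound
    rintro x ⟨P, hP, rfl⟩
    set Q : Matrix (Fin n) (Fin k) ℂ := Uᴴ * P with hQdef
    have hQ : Qᴴ * Q = 1 := by
      rw [hQdef, Matrix.conjTranspose_mul, Matrix.conjTranspose_conjTranspose,
        ← Matrix.mul_assoc, Matrix.mul_assoc Pᴴ U Uᴴ, hU2, Matrix.mul_one]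
      exact hP
    set t : Fin n → ℝ := fun i => ∑ j, Complex.normSq (Q i j) with htdef
    have hQQ : ∀ i, (Q * Qᴴ) i i = ((t i : ℝ) : ℂ) := by
      intro i
      rw [Matrix.mul_apply, htdef]
      push_cast
      exact Finset.sum_congr rfl fun j _ => by
        rw [Matrix.conjTranspose_apply, Complex.star_def, Complex.mul_conj]
    have ht0 : ∀ i, 0 ≤ t i := fun i => Finset.sum_nonneg fun j _ => Complex.normSq_nonneg _
    set M : Matrix (Fin n) (Fin n) ℂ := 1 - Q * Qᴴ with hMdef
    have hMH : Mᴴ = M := by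
      rw [hMdef]
      simp [Matrix.conjTranspose_sub, Matrix.conjTranspose_mul]
    have hproj : Q * Qᴴ * (Q * Qᴴ) = Q * Qᴴ := by
      rw [Matrix.mul_assoc, ← Matrix.mul_assoc Qᴴ, hQ, Matrix.one_mul]
    have hMM : M * M = M := by
      rw [hMdef]
      calc (1 - Q * Qᴴ) * (1 - Q * Qᴴ)
          = 1 - Q * Qᴴ - Q * Qᴴ + Q * Qᴴ * (Q * Qᴴ) := by noncomm_ring
        _ = 1 - Q * Qᴴ := by rw [hproj]; abel
    have ht1 : ∀ i, t i ≤ 1 := by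
      intro i
      have h1 : M i i = (M * Mᴴ) i i := by rw [hMH, hMM]
      have h2 : 0 ≤ (M i i).re := by
        rw [h1, Matrix.mul_apply]
        rw [show ∑ j, M i j * Mᴴ j i = ((∑ j, Complex.normSq (M i j) : ℝ) : ℂ) from ?_]
        · rw [Complex.ofReal_re]
          exact Finset.sum_nonneg fun j _ => Complex.normSq_nonneg _
        · push_cast
          exact Finset.sum_congr rfl fun j _ => by
            rw [Matrix.conjTranspose_apply, Complex.star_def, Complex.mul_conj]
      have h3 : (M i i).re = 1 - t i := by
        rw [hMdef]
        simp [Matrix.sub_apply, Matrix.one_apply_eq, hQQ i]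
      linarith
    have htsum : ∑ i, t i = (k : ℝ) := by
      have h5 : ((∑ i, t i : ℝ) : ℂ) = (k : ℂ) := by
        push_cast
        calc ∑ i, ((t i : ℝ) : ℂ) = ∑ i, (Q * Qᴴ) i i :=
              Finset.sum_congr rfl fun i _ => (hQQ i).symm
          _ = Matrix.trace (Q * Qᴴ) := rfl
          _ = Matrix.trace (Qᴴ * Q) := Matrix.trace_mul_comm Q Qᴴ
          _ = Matrix.trace (1 : Matrix (Fin k) (Fin k) ℂ) := by rw [hQ]
          _ = (k : ℂ) := by simp [Matrix.trace_one]
      exact_mod_cast h5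
    have htr : Matrix.trace (Pᴴ * H * P)
        = ∑ i, (hH.eigenvalues i : ℂ) * ((t i : ℝ) : ℂ) := by
      have hPH : Pᴴ * H * P = Qᴴ * D * Q := by
        rw [hspec, hQdef, Matrix.conjTranspose_mul, Matrix.conjTranspose_conjTranspose]
        simp only [Matrix.mul_assoc]
      rw [hPH, Matrix.trace_mul_cycle]
      simp only [Matrix.trace, Matrix.diag, hDdef, Matrix.mul_diagonal, Function.comp_apply]
      exact Finset.sum_congr rfl fun i _ => by rw [hQQ i, mul_comm]; rfl
    have hre : (Matrix.trace (Pᴴ * H * P)).re = ∑ i, hH.eigenvalues i * t i := by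
      rw [htr]
      rw [show ∑ i, ((hH.eigenvalues i : ℝ) : ℂ) * ((t i : ℝ) : ℂ)
          = ((∑ i, hH.eigenvalues i * t i : ℝ) : ℂ) from by push_cast; rfl]
      exact Complex.ofReal_re _
    rw [hre]
    exact sum_mul_le_sortedDesc_topk hkn hH.eigenvalues t ht0 ht1 htsum
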